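/- Let Y be a nonempty closed subset of the unit ball of ℝ^K, let (e_k)_{k=1}^K be the canonical orthonormal basis of ℝ^K, let T₁, T₂ : ℝ^K → H be bounded linear maps, and let x ∈ H with ‖x‖ ≤ 1. Then ( inf_{y ∈ Y} ‖x − T₁ y‖² − inf_{y ∈ Y} ‖x − T₂ y‖² )² ≤ 8 Σ_{k=1}^K ( ⟨x, T₁ e_k⟩ − ⟨x, T₂ e_k⟩ )² + 2 Σ_{k,l=1}^K ( ⟨T₁ e_k, T₁ e_l⟩ − ⟨T₂ e_k, T₂ e_l⟩ )². -/
import Mathlib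

open RealInnerProductSpace

section Aux

variable {H : Type*} [NormedAddCommGroup H] [InnerProductSpace ℝ H] {K : ℕ}

lemma aux_decomp (T : EuclideanSpace ℝ (Fin K) →L[ℝ] H) (y : EuclideanSpace ℝ (Fin K)) :
    T y = ∑ k, y k • T (EuclideanSpace.single k 1) := by
  have h := (EuclideanSpace.basisFun (Fin K) ℝ).sum_repr y
  simp only [EuclideanSpace.basisFun_repr, EuclideanSpace.basisFun_apply] at h
  conv_lhs => rw [← h]
  simp [map_sum]

lemma aux_inner (T : EuclideanSpace ℝ (Fin K) →L[ℝ] H) (x : H) (y : EuclideanSpace ℝ (Fin K)) :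
    ⟪x, T y⟫ = ∑ k, y k * ⟪x, T (EuclideanSpace.single k 1)⟫ := by
  rw [aux_decomp T y, inner_sum]
  simp [real_inner_smul_right]

lemma aux_norm_sq (T : EuclideanSpace ℝ (Fin K) →L[ℝ] H) (y : EuclideanSpace ℝ (Fin K)) :
    ‖T y‖ ^ 2 = ∑ k, ∑ l, (y k * y l) *
      ⟪T (EuclideanSpace.single k 1), T (EuclideanSpace.single l 1)⟫ := by
  rw [← real_inner_self_eq_norm_sq]
  conv_lhs => rw [aux_decomp T y]
  rw [sum_inner]
  refine Finset.sum_congr rfl fun k _ => ?_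
  rw [real_inner_smul_left, inner_sum, Finset.mul_sum]
  refine Finset.sum_congr rfl fun l _ => ?_
  rw [real_inner_smul_right]
  ring

lemma aux_sInf {E : Type*} {f g : E → ℝ} {Y : Set E} (hY : Y.Nonempty) {D : ℝ}
    (hf0 : ∀ y ∈ Y, 0 ≤ f y) (hg0 : ∀ y ∈ Y, 0 ≤ g y)
    (hfg : ∀ y ∈ Y, |f y - g y| ≤ D) :
    |sInf (f '' Y) - sInf (g '' Y)| ≤ D := by
  have hbf : BddBelow (f '' Y) := ⟨0, by rintro _ ⟨y, hy, rfl⟩; exact hf0 y hy⟩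
  have hbg : BddBelow (g '' Y) := ⟨0, by rintro _ ⟨y, hy, rfl⟩; exact hg0 y hy⟩
  rw [abs_sub_le_iff]
  constructor
  · have h1 : sInf (f '' Y) - D ≤ sInf (g '' Y) := by
      refine le_csInf (hY.image g) ?_
      rintro _ ⟨y, hy, rfl⟩
      have h2 : sInf (f '' Y) ≤ f y := csInf_le hbf ⟨y, hy, rfl⟩
      have := (abs_le.mp (hfg y hy)).2
      linarith
    linarith
  · have h1 : sInf (g '' Y) - D ≤ sInf (f '' Y) := by
      refine le_csInf (hY.image f) ?_
      rintro _ ⟨y, hy, rfl⟩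
      have h2 : sInf (g '' Y) ≤ g y := csInf_le hbg ⟨y, hy, rfl⟩
      have := (abs_le.mp (hfg y hy)).1
      linarith
    linarith

end Aux

theorem stmt18 {H : Type*} [NormedAddCommGroup H] [InnerProductSpace ℝ H]
    {K : ℕ} (hK : 1 ≤ K)
    {Y : Set (EuclideanSpace ℝ (Fin K))} (hYne : Y.Nonempty) (hYcl : IsClosed Y)
    (hYb : ∀ y ∈ Y, ‖y‖ ≤ 1)
    (T₁ T₂ : EuclideanSpace ℝ (Fin K) →L[ℝ] H)
    (x : H) (hx : ‖x‖ ≤ 1) :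
    (sInf ((fun y => ‖x - T₁ y‖ ^ 2) '' Y) - sInf ((fun y => ‖x - T₂ y‖ ^ 2) '' Y)) ^ 2 ≤
      8 * ∑ k, (⟪x, T₁ (EuclideanSpace.single k 1)⟫ - ⟪x, T₂ (EuclideanSpace.single k 1)⟫) ^ 2 +
      2 * ∑ k, ∑ l,
        (⟪T₁ (EuclideanSpace.single k 1), T₁ (EuclideanSpace.single l 1)⟫ -
          ⟪T₂ (EuclideanSpace.single k 1), T₂ (EuclideanSpace.single l 1)⟫) ^ 2 := by
  set a : Fin K → ℝ := fun k =>
    ⟪x, T₁ (EuclideanSpace.single k 1)⟫ - ⟪x, T₂ (EuclideanSpace.single k 1)⟫ with ha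
  set G : Fin K × Fin K → ℝ := fun p =>
    ⟪T₁ (EuclideanSpace.single p.1 1), T₁ (EuclideanSpace.single p.2 1)⟫ -
      ⟪T₂ (EuclideanSpace.single p.1 1), T₂ (EuclideanSpace.single p.2 1)⟫ with hG
  set A : ℝ := ∑ k, a k ^ 2 with hA
  set B : ℝ := ∑ p : Fin K × Fin K, G p ^ 2 with hB
  have hA0 : 0 ≤ A := Finset.sum_nonneg fun _ _ => sq_nonneg _
  have hB0 : 0 ≤ B := Finset.sum_nonneg fun _ _ => sq_nonneg _
  set D : ℝ := 2 * Real.sqrt A + Real.sqrt B with hD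
  have key : ∀ y ∈ Y, |‖x - T₁ y‖ ^ 2 - ‖x - T₂ y‖ ^ 2| ≤ D := by
    intro y hy
    have hy1 : ‖y‖ ≤ 1 := hYb y hy
    have hysq : ∑ k, (y k) ^ 2 ≤ 1 := by
      have h2 : ‖y‖ ^ 2 = ∑ k, (y k) ^ 2 := by
        rw [EuclideanSpace.norm_eq y,
          Real.sq_sqrt (Finset.sum_nonneg fun _ _ => sq_nonneg _)]
        simp [sq_abs]
      nlinarith [norm_nonneg y]
    -- first term
    have h1 : |⟪x, T₁ y⟫ - ⟪x, T₂ y⟫| ≤ Real.sqrt A := by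
      rw [aux_inner, aux_inner, ← Finset.sum_sub_distrib]
      have heq : ∀ k ∈ Finset.univ, y k * ⟪x, T₁ (EuclideanSpace.single k 1)⟫ -
          y k * ⟪x, T₂ (EuclideanSpace.single k 1)⟫ = y k * a k := fun k _ => by
        rw [ha]; ring
      rw [Finset.sum_congr rfl heq]
      have hcs : (∑ k, y k * a k) ^ 2 ≤ (∑ k, (y k) ^ 2) * A :=
        Finset.sum_mul_sq_le_sq_mul_sq Finset.univ y a
      have h2 : (∑ k, (y k) ^ 2) * A ≤ A := by nlinarith
      calc |∑ k, y k * a k| = Real.sqrt ((∑ k, y k * a k) ^ 2) :=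
            (Real.sqrt_sq_eq_abs _).symm
      _ ≤ Real.sqrt A := Real.sqrt_le_sqrt (hcs.trans h2)
    -- second term
    have h2 : |‖T₁ y‖ ^ 2 - ‖T₂ y‖ ^ 2| ≤ Real.sqrt B := by
      rw [aux_norm_sq, aux_norm_sq]
      have hrw : (∑ k, ∑ l, (y k * y l) *
            ⟪T₁ (EuclideanSpace.single k 1), T₁ (EuclideanSpace.single l 1)⟫)
          - (∑ k, ∑ l, (y k * y l) *
            ⟪T₂ (EuclideanSpace.single k 1), T₂ (EuclideanSpace.single l 1)⟫)
          = ∑ p : Fin K × Fin K, (y p.1 * y p.2) * G p := by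
        rw [Fintype.sum_prod_type, ← Finset.sum_sub_distrib]
        refine Finset.sum_congr rfl fun k _ => ?_
        rw [← Finset.sum_sub_distrib]
        refine Finset.sum_congr rfl fun l _ => ?_
        rw [hG]; ring
      rw [hrw]
      have hcs : (∑ p : Fin K × Fin K, (y p.1 * y p.2) * G p) ^ 2 ≤
          (∑ p : Fin K × Fin K, (y p.1 * y p.2) ^ 2) * B :=
        Finset.sum_mul_sq_le_sq_mul_sq Finset.univ _ G
      have hyy : ∑ p : Fin K × Fin K, (y p.1 * y p.2) ^ 2 ≤ 1 := by
        have : ∑ p : Fin K × Fin K, (y p.1 * y p.2) ^ 2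
            = (∑ k, (y k) ^ 2) * (∑ l, (y l) ^ 2) := by
          rw [Fintype.sum_prod_type, Finset.sum_mul_sum]
          simp [mul_pow]
        rw [this]
        nlinarith [Finset.sum_nonneg (fun k (_ : k ∈ Finset.univ) => sq_nonneg (y k))]
      have hle : (∑ p : Fin K × Fin K, (y p.1 * y p.2) * G p) ^ 2 ≤ B := by nlinarith
      calc |∑ p : Fin K × Fin K, (y p.1 * y p.2) * G p|
          = Real.sqrt ((∑ p : Fin K × Fin K, (y p.1 * y p.2) * G p) ^ 2) :=
            (Real.sqrt_sq_eq_abs _).symm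
      _ ≤ Real.sqrt B := Real.sqrt_le_sqrt hle
    have hexp : ‖x - T₁ y‖ ^ 2 - ‖x - T₂ y‖ ^ 2 =
        -(2 * (⟪x, T₁ y⟫ - ⟪x, T₂ y⟫)) + (‖T₁ y‖ ^ 2 - ‖T₂ y‖ ^ 2) := by
      rw [norm_sub_sq_real, norm_sub_sq_real]
      ring
    rw [hexp]
    calc |-(2 * (⟪x, T₁ y⟫ - ⟪x, T₂ y⟫)) + (‖T₁ y‖ ^ 2 - ‖T₂ y‖ ^ 2)|
        ≤ |-(2 * (⟪x, T₁ y⟫ - ⟪x, T₂ y⟫))| + |‖T₁ y‖ ^ 2 - ‖T₂ y‖ ^ 2| := abs_add_le _ _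
    _ ≤ 2 * Real.sqrt A + Real.sqrt B := by
        rw [abs_neg, abs_mul, abs_two]
        gcongr
    _ = D := hD.symm
  have hinf : |sInf ((fun y => ‖x - T₁ y‖ ^ 2) '' Y) -
      sInf ((fun y => ‖x - T₂ y‖ ^ 2) '' Y)| ≤ D :=
    aux_sInf hYne (fun y _ => sq_nonneg _) (fun y _ => sq_nonneg _) key
  have hsq : (sInf ((fun y => ‖x - T₁ y‖ ^ 2) '' Y) -
      sInf ((fun y => ‖x - T₂ y‖ ^ 2) '' Y)) ^ 2 ≤ D ^ 2 := by
    have := abs_le.mp hinf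
    nlinarith
  have hDsq : D ^ 2 ≤ 8 * A + 2 * B := by
    have hsA : Real.sqrt A ^ 2 = A := Real.sq_sqrt hA0
    have hsB : Real.sqrt B ^ 2 = B := Real.sq_sqrt hB0
    have : D = 2 * Real.sqrt A + Real.sqrt B := hD
    rw [this]
    nlinarith [sq_nonneg (2 * Real.sqrt A - Real.sqrt B)]
  have hBrw : B = ∑ k, ∑ l,
      (⟪T₁ (EuclideanSpace.single k 1), T₁ (EuclideanSpace.single l 1)⟫ -
        ⟪T₂ (EuclideanSpace.single k 1), T₂ (EuclideanSpace.single l 1)⟫) ^ 2 := by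
    rw [hB, Fintype.sum_prod_type]
  calc (sInf ((fun y => ‖x - T₁ y‖ ^ 2) '' Y) -
      sInf ((fun y => ‖x - T₂ y‖ ^ 2) '' Y)) ^ 2 ≤ D ^ 2 := hsq
  _ ≤ 8 * A + 2 * B := hDsq
  _ = _ := by rw [hBrw, hA]
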